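/- Let Γ be a discrete group with 2-cocycle σ. The σ-twisted group von Neumann algebra vN(Γ,σ) on ℓ²(Γ) is a factor (i.e., its center consists only of scalar multiples of the identity) if and only if (Γ,σ) satisfies Kleppner's condition, i.e., the only finite σ-regular conjugacy class of Γ is the trivial class {e}. -/

import Mathlib

open scoped ENNReal

set_option linter.unusedSectionVars false
set_option linter.unusedVariables false
set_option maxHeartbeats 1000000

namespace KleppnerAux

variable {Γ : Type*} [Group Γ]

local notation "H" => lp (fun _ : Γ => ℂ) 2

lemma csolve1 (A B C F1 F2 : ℂ) (hA : A ≠ 0) (hB : B ≠ 0)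
    (h : A * (B⁻¹ * F1) = C * F2) : F1 = B * (A⁻¹ * (C * F2)) := by
  rw [← h]
  field_simp

lemma csolve2 (P Q R T F : ℂ) (hP : P ≠ 0) (hQ : Q ≠ 0) (hF : F ≠ 0)
    (h1 : F = P * (Q⁻¹ * (R * F))) (h2 : T * P = Q) : T = R := by
  have h3 : Q * F = P * (R * F) := by
    calc Q * F = Q * (P * (Q⁻¹ * (R * F))) := by rw [← h1]
    _ = (Q * Q⁻¹) * (P * (R * F)) := by ring
    _ = P * (R * F) := by rw [mul_inv_cancel₀ hQ, one_mul]
  have h4 : Q = P * R := mul_right_cancel₀ hF (by linear_combination h3)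
  have h5 : T * P = R * P := by rw [h2, h4]; ring
  exact mul_right_cancel₀ hP h5

lemma csolve3 (a s u q v w : ℂ) (hs : s ≠ 0) (hv : v ≠ 0)
    (h : a * u * v = q * w * s) : a * s⁻¹ * u = q * v⁻¹ * w := by
  field_simp
  linear_combination h

lemma csolve4 (a1 s1 a2 s2 : ℂ) (h1 : s1 ≠ 0) (h2 : s2 ≠ 0)
    (h : a1 * s2 = a2 * s1) : a1 * s1⁻¹ = a2 * s2⁻¹ := by
  field_simp
  linear_combination h

lemma sigma_ne_zero (σ : Γ → Γ → ℂ) (hσ_unit : ∀ x y, ‖σ x y‖ = 1) (x y : Γ) :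
    σ x y ≠ 0 := by
  intro h
  have := hσ_unit x y
  rw [h] at this
  simp at this

lemma sigma_one_left (σ : Γ → Γ → ℂ)
    (hσ_cocycle : ∀ x y z, σ x y * σ (x * y) z = σ x (y * z) * σ y z)
    (hσ_one : σ 1 1 = 1) (hσ_unit : ∀ x y, ‖σ x y‖ = 1) (z : Γ) : σ 1 z = 1 := by
  have h := hσ_cocycle 1 1 z
  simp only [one_mul, hσ_one] at h
  have hz : σ 1 z ≠ 0 := sigma_ne_zero σ hσ_unit 1 z
  field_simp at h
  exact h.symm

lemma sigma_one_right (σ : Γ → Γ → ℂ)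
    (hσ_cocycle : ∀ x y z, σ x y * σ (x * y) z = σ x (y * z) * σ y z)
    (hσ_one : σ 1 1 = 1) (hσ_unit : ∀ x y, ‖σ x y‖ = 1) (x : Γ) : σ x 1 = 1 := by
  have h := hσ_cocycle x 1 1
  simp only [mul_one, hσ_one] at h
  have hx : σ x 1 ≠ 0 := sigma_ne_zero σ hσ_unit x 1
  field_simp at h
  tauto

lemma lam_mul (σ : Γ → Γ → ℂ) (hσ_unit : ∀ x y, ‖σ x y‖ = 1)
    (hσ_cocycle : ∀ x y z, σ x y * σ (x * y) z = σ x (y * z) * σ y z)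
    (lam : Γ → (H →L[ℂ] H))
    (hlam : ∀ (γ : Γ) (f : H) (γ' : Γ),
      (lam γ f) γ' = σ γ (γ⁻¹ * γ') * f (γ⁻¹ * γ'))
    (x y : Γ) : lam x * lam y = σ x y • lam (x * y) := by
  refine ContinuousLinearMap.ext fun f => ?_
  apply lp.ext
  funext γ'
  rw [ContinuousLinearMap.mul_apply, ContinuousLinearMap.smul_apply]
  rw [lp.coeFn_smul]
  simp only [Pi.smul_apply, smul_eq_mul]
  rw [hlam, hlam, hlam]
  have harg : (x * y)⁻¹ * γ' = y⁻¹ * (x⁻¹ * γ') := by group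
  rw [harg]
  have hc := hσ_cocycle x y (y⁻¹ * (x⁻¹ * γ'))
  rw [mul_inv_cancel_left] at hc
  linear_combination (f (y⁻¹ * (x⁻¹ * γ')) : ℂ) * hc.symm

lemma lam_single [DecidableEq Γ] (σ : Γ → Γ → ℂ)
    (lam : Γ → (H →L[ℂ] H))
    (hlam : ∀ (γ : Γ) (f : H) (γ' : Γ),
      (lam γ f) γ' = σ γ (γ⁻¹ * γ') * f (γ⁻¹ * γ'))
    (γ x : Γ) : lam γ (lp.single 2 x 1) = σ γ x • lp.single 2 (γ * x) 1 := by
  apply lp.ext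
  funext y
  rw [lp.coeFn_smul]
  simp only [Pi.smul_apply, smul_eq_mul]
  rw [hlam]
  by_cases hy : y = γ * x
  · subst hy
    rw [inv_mul_cancel_left, lp.single_apply_self, lp.single_apply_self]
  · have h1 : γ⁻¹ * y ≠ x := fun h => hy (by rw [← h]; group)
    rw [lp.single_apply_ne _ _ _ h1, lp.single_apply_ne _ _ _ hy, mul_zero, mul_zero]

lemma ext_singles [DecidableEq Γ] (T S : H →L[ℂ] H)
    (h : ∀ x : Γ, T (lp.single 2 x 1) = S (lp.single 2 x 1)) : T = S := by
  refine ContinuousLinearMap.ext fun f => ?_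
  have hf := lp.hasSum_single (E := fun _ : Γ => ℂ) (p := 2) (by norm_num) f
  have key : ∀ x : Γ, T (lp.single 2 x (f x)) = S (lp.single 2 x (f x)) := by
    intro x
    have h1 : lp.single 2 x (f x) = f x • (lp.single 2 x (1 : ℂ) : H) := by
      rw [← lp.single_smul, smul_eq_mul, mul_one]
    rw [h1, map_smul, map_smul, h x]
  have hT := T.hasSum hf
  have hS := S.hasSum hf
  rw [show (fun b => T (lp.single 2 b (f b))) = (fun b => S (lp.single 2 b (f b))) from
    funext key] at hT
  exact hT.unique hS

lemma rho_memℓp (σ : Γ → Γ → ℂ) (hσ_unit : ∀ x y, ‖σ x y‖ = 1) (γ : Γ) (f : H) :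
    Memℓp (fun x : Γ => (σ x γ)⁻¹ * f (x * γ)) 2 := by
  apply memℓp_gen
  have hs := (lp.memℓp f).summable (p := 2) (by norm_num)
  have hs2 := ((Equiv.mulRight γ).summable_iff
    (f := fun i : Γ => ‖f i‖ ^ (2 : ℝ≥0∞).toReal)).2 hs
  refine hs2.congr fun x => ?_
  simp only [Function.comp, Equiv.coe_mulRight]
  congr 1
  rw [norm_mul, norm_inv, hσ_unit, inv_one, one_mul]

lemma rho_norm (σ : Γ → Γ → ℂ) (hσ_unit : ∀ x y, ‖σ x y‖ = 1) (γ : Γ) (f : H) :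
    ‖(⟨fun x : Γ => (σ x γ)⁻¹ * f (x * γ), rho_memℓp σ hσ_unit γ f⟩ : H)‖ = ‖f‖ := by
  rw [lp.norm_eq_tsum_rpow (by norm_num) f,
    lp.norm_eq_tsum_rpow (by norm_num)]
  congr 1
  rw [← (Equiv.mulRight γ).tsum_eq (fun i : Γ => ‖f i‖ ^ (2 : ℝ≥0∞).toReal)]
  refine tsum_congr fun x => ?_
  simp only [Equiv.coe_mulRight]
  congr 1
  show ‖(σ x γ)⁻¹ * f (x * γ)‖ = _
  rw [norm_mul, norm_inv, hσ_unit, inv_one, one_mul]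

/-- the twisted right regular representation -/
noncomputable def rho (σ : Γ → Γ → ℂ) (hσ_unit : ∀ x y, ‖σ x y‖ = 1) (γ : Γ) : H →L[ℂ] H :=
  LinearMap.mkContinuous
    { toFun := fun f => (⟨fun x : Γ => (σ x γ)⁻¹ * f (x * γ), rho_memℓp σ hσ_unit γ f⟩ : H)
      map_add' := by
        intro f g
        apply lp.ext
        funext x
        show (σ x γ)⁻¹ * (f + g) (x * γ) = (σ x γ)⁻¹ * f (x * γ) + (σ x γ)⁻¹ * g (x * γ)
        rw [lp.coeFn_add]
        simp [mul_add]
      map_smul' := by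
        intro c f
        apply lp.ext
        funext x
        show (σ x γ)⁻¹ * (c • f) (x * γ) = c • ((σ x γ)⁻¹ * f (x * γ))
        rw [lp.coeFn_smul]
        simp only [Pi.smul_apply, smul_eq_mul]
        ring }
    1
    (fun f => by rw [one_mul]; exact le_of_eq (rho_norm σ hσ_unit γ f))

lemma rho_apply (σ : Γ → Γ → ℂ) (hσ_unit : ∀ x y, ‖σ x y‖ = 1) (γ : Γ) (f : H) (x : Γ) :
    (rho σ hσ_unit γ f) x = (σ x γ)⁻¹ * f (x * γ) := rfl

lemma rho_lam_comm (σ : Γ → Γ → ℂ) (hσ_unit : ∀ x y, ‖σ x y‖ = 1)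
    (hσ_cocycle : ∀ x y z, σ x y * σ (x * y) z = σ x (y * z) * σ y z)
    (lam : Γ → (H →L[ℂ] H))
    (hlam : ∀ (γ : Γ) (f : H) (γ' : Γ),
      (lam γ f) γ' = σ γ (γ⁻¹ * γ') * f (γ⁻¹ * γ'))
    (γ β : Γ) : rho σ hσ_unit γ * lam β = lam β * rho σ hσ_unit γ := by
  refine ContinuousLinearMap.ext fun f => ?_
  apply lp.ext
  funext x
  rw [ContinuousLinearMap.mul_apply, ContinuousLinearMap.mul_apply]
  rw [rho_apply, hlam, hlam, rho_apply]
  have harg : β⁻¹ * (x * γ) = (β⁻¹ * x) * γ := by group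
  rw [harg]
  have hc := hσ_cocycle β (β⁻¹ * x) γ
  rw [mul_inv_cancel_left] at hc
  have h1 : σ x γ ≠ 0 := fun h => by simpa [h] using hσ_unit x γ
  have h2 : σ (β⁻¹ * x) γ ≠ 0 := fun h => by simpa [h] using hσ_unit (β⁻¹ * x) γ
  have key : ∀ A B C D F : ℂ, C ≠ 0 → B ≠ 0 → D * C = A * B →
      C⁻¹ * (A * F) = D * (B⁻¹ * F) := by
    intro A B C D F hC hB h
    field_simp
    linear_combination F * h.symm
  exact key _ _ _ _ _ h1 h2 hc

end KleppnerAux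
open KleppnerAux in
/-- the twisted group von Neumann algebra `vN(Γ,σ)` is a factor if and only
if `(Γ,σ)` satisfies Kleppner's condition: the only finite `σ`-regular conjugacy class is
the trivial one. -/
theorem twistedGroupVonNeumannAlgebra_factor_iff_kleppner {Γ : Type*} [Group Γ]
    (σ : Γ → Γ → ℂ)
    (hσ_unit : ∀ x y, ‖σ x y‖ = 1)
    (hσ_cocycle : ∀ x y z, σ x y * σ (x * y) z = σ x (y * z) * σ y z)
    (hσ_one : σ 1 1 = 1)
    -- the σ-projective left regular representation on ℓ²(Γ)
    (lam : Γ → (lp (fun _ : Γ => ℂ) 2 →L[ℂ] lp (fun _ : Γ => ℂ) 2))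
    (hlam : ∀ (γ : Γ) (f : lp (fun _ : Γ => ℂ) 2) (γ' : Γ),
      (lam γ f) γ' = σ γ (γ⁻¹ * γ') * f (γ⁻¹ * γ'))
    -- M = vN(Γ,σ), the double commutant of {λ_σ(γ)}
    (M : Set (lp (fun _ : Γ => ℂ) 2 →L[ℂ] lp (fun _ : Γ => ℂ) 2))
    (hM : M = {a | ∀ b, (∀ γ : Γ, b * lam γ = lam γ * b) → a * b = b * a}) :
    -- M is a factor ↔ Kleppner's condition
    (∀ a ∈ M, (∀ b ∈ M, a * b = b * a) → ∃ c : ℂ, a = c • (1 : lp (fun _ : Γ => ℂ) 2 →L[ℂ] lp (fun _ : Γ => ℂ) 2))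
      ↔ (∀ γ : Γ, (∀ γ' : Γ, γ * γ' = γ' * γ → σ γ γ' = σ γ' γ) →
          {δ : Γ | ∃ β : Γ, β⁻¹ * γ * β = δ}.Finite → γ = 1) := by
  classical
  have hne : ∀ x y : Γ, σ x y ≠ 0 := sigma_ne_zero σ hσ_unit
  have hone_left := sigma_one_left σ hσ_cocycle hσ_one hσ_unit
  have hone_right := sigma_one_right σ hσ_cocycle hσ_one hσ_unit
  have hmul := lam_mul σ hσ_unit hσ_cocycle lam hlam
  have hsingle := lam_single σ lam hlam
  constructor
  · -- factor → Kleppner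
    intro hfac γ₀ hreg hfin
    by_contra hne1
    set ψ : Γ → ℂ := fun β => σ γ₀ β * (σ β (β⁻¹ * γ₀ * β))⁻¹ with hψ
    -- well-definedness of ψ on the conjugacy class
    have wd_core : ∀ β₁ β₂ : Γ, β₁⁻¹ * γ₀ * β₁ = β₂⁻¹ * γ₀ * β₂ →
        σ γ₀ β₁ * σ β₂ (β₁⁻¹ * γ₀ * β₁) = σ γ₀ β₂ * σ β₁ (β₁⁻¹ * γ₀ * β₁) := by
      intro β₁ β₂ h12
      set g := β₁ * β₂⁻¹ with hg
      set δ := β₁⁻¹ * γ₀ * β₁ with hδ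
      have hgβ : g * β₂ = β₁ := by rw [hg]; group
      have hcommg : γ₀ * g = g * γ₀ := by
        have h' : β₁ * δ * β₂⁻¹ = β₁ * (β₂⁻¹ * γ₀ * β₂) * β₂⁻¹ := by rw [h12]
        calc γ₀ * g = β₁ * (β₁⁻¹ * γ₀ * β₁) * β₂⁻¹ := by rw [hg]; group
        _ = β₁ * (β₂⁻¹ * γ₀ * β₂) * β₂⁻¹ := by rw [← hδ]; exact h'
        _ = g * γ₀ := by rw [hg]; group
      have hrg : σ γ₀ g = σ g γ₀ := hreg g hcommg
      have h1 := hσ_cocycle γ₀ g β₂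
      rw [hcommg, hgβ] at h1
      have h2 := hσ_cocycle g γ₀ β₂
      have hi : σ γ₀ β₁ * σ g β₂ = σ g (γ₀ * β₂) * σ γ₀ β₂ := by
        linear_combination h2 - h1 + σ (g * γ₀) β₂ * hrg
      have h3 := hσ_cocycle g β₂ δ
      rw [hgβ] at h3
      have hβδ : β₂ * δ = γ₀ * β₂ := by rw [h12]; group
      rw [hβδ] at h3
      have h4 : σ g β₂ * (σ γ₀ β₁ * σ β₂ δ) = σ g β₂ * (σ γ₀ β₂ * σ β₁ δ) := by
        linear_combination σ β₂ δ * hi - σ γ₀ β₂ * h3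
      exact mul_left_cancel₀ (hne g β₂) h4
    have wd : ∀ β₁ β₂ : Γ, β₁⁻¹ * γ₀ * β₁ = β₂⁻¹ * γ₀ * β₂ → ψ β₁ = ψ β₂ := by
      intro β₁ β₂ h12
      have hc := wd_core β₁ β₂ h12
      simp only [hψ]
      rw [← h12]
      exact csolve4 _ _ _ _ (hne β₁ (β₁⁻¹ * γ₀ * β₁)) (hne β₂ (β₁⁻¹ * γ₀ * β₁)) hc
    set cc : Γ → ℂ := fun δ => if h : ∃ β : Γ, β⁻¹ * γ₀ * β = δ then ψ h.choose else 0
      with hccdef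
    have cc_spec : ∀ (δ b : Γ), b⁻¹ * γ₀ * b = δ → cc δ = ψ b := by
      intro δ b hb
      have hex : ∃ β : Γ, β⁻¹ * γ₀ * β = δ := ⟨b, hb⟩
      simp only [hccdef]
      rw [dif_pos hex]
      exact wd _ _ (hex.choose_spec.trans hb.symm)
    set s : Finset Γ := hfin.toFinset with hs
    have hmem : ∀ δ : Γ, δ ∈ s ↔ ∃ β : Γ, β⁻¹ * γ₀ * β = δ := by
      intro δ
      rw [hs, Set.Finite.mem_toFinset]
      exact Iff.rfl
    set A : lp (fun _ : Γ => ℂ) 2 →L[ℂ] lp (fun _ : Γ => ℂ) 2 := ∑ δ ∈ s, cc δ • lam δ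
      with hA
    -- the key coefficient identity
    have CI : ∀ b β : Γ, ψ b * σ (b⁻¹ * γ₀ * b) β
        = ψ (b * β) * σ β (β⁻¹ * (b⁻¹ * γ₀ * b) * β) := by
      intro b β
      set δ := b⁻¹ * γ₀ * b with hδ
      set δ' := β⁻¹ * δ * β with hδ'
      have hδ'' : (b * β)⁻¹ * γ₀ * (b * β) = δ' := by rw [hδ', hδ]; group
      have hbδ : b * δ = γ₀ * b := by rw [hδ]; group
      have hβδ' : β * δ' = δ * β := by rw [hδ']; group
      have hcA := hσ_cocycle γ₀ b β
      have hcB := hσ_cocycle b δ β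
      rw [hbδ] at hcB
      have hcC := hσ_cocycle b β δ'
      rw [hβδ'] at hcC
      have core : (σ γ₀ b * σ δ β * σ (b * β) δ') * (σ (γ₀ * b) β * σ b β)
          = (σ γ₀ (b * β) * σ β δ' * σ b δ) * (σ (γ₀ * b) β * σ b β) := by
        linear_combination (σ δ β * σ (b * β) δ' * σ b β) * hcA
          + (σ γ₀ (b * β) * σ δ β * σ b β) * hcC
          - (σ γ₀ (b * β) * σ β δ' * σ b β) * hcB
      have core' := mul_right_cancel₀ (mul_ne_zero (hne (γ₀ * b) β) (hne b β)) core
      simp only [hψ]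
      rw [hδ'']
      exact csolve3 _ _ _ _ _ _ (hne b δ) (hne (b * β) δ') core'
    -- A commutes with every lam β
    have hAcomm : ∀ β : Γ, lam β * A = A * lam β := by
      intro β
      rw [hA, Finset.mul_sum, Finset.sum_mul]
      have e1 : ∀ δ : Γ, lam β * (cc δ • lam δ) = (cc δ * σ β δ) • lam (β * δ) := by
        intro δ
        rw [mul_smul_comm, hmul, smul_smul]
      have e2 : ∀ δ : Γ, (cc δ • lam δ) * lam β = (cc δ * σ δ β) • lam (δ * β) := by
        intro δ
        rw [smul_mul_assoc, hmul, smul_smul]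
      rw [Finset.sum_congr rfl fun δ _ => e1 δ, Finset.sum_congr rfl fun δ _ => e2 δ]
      refine (Finset.sum_equiv ((Equiv.mulLeft β⁻¹).trans (Equiv.mulRight β)) ?_ ?_).symm
      · intro δ
        simp only [Equiv.trans_apply, Equiv.coe_mulLeft, Equiv.coe_mulRight]
        rw [hmem, hmem]
        constructor
        · rintro ⟨b, hb⟩
          exact ⟨b * β, by rw [← hb]; group⟩
        · rintro ⟨b, hb⟩
          refine ⟨b * β⁻¹, ?_⟩
          rw [show (b * β⁻¹)⁻¹ * γ₀ * (b * β⁻¹) = β * (b⁻¹ * γ₀ * b) * β⁻¹ by group, hb]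
          group
      · intro δ hδs
        simp only [Equiv.trans_apply, Equiv.coe_mulLeft, Equiv.coe_mulRight]
        obtain ⟨b, hb⟩ := (hmem δ).1 hδs
        have hCI := CI b β
        rw [hb] at hCI
        have hc1 : cc δ = ψ b := cc_spec δ b hb
        have hc2 : cc (β⁻¹ * δ * β) = ψ (b * β) :=
          cc_spec _ (b * β) (by rw [← hb]; group)
        rw [show β * (β⁻¹ * δ * β) = δ * β by group, hc1, hc2, hCI]
    -- A ∈ M
    have hAM : A ∈ M := by
      rw [hM]
      intro b hb
      rw [hA, Finset.sum_mul, Finset.mul_sum]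
      refine Finset.sum_congr rfl fun δ _ => ?_
      rw [smul_mul_assoc, mul_smul_comm, hb δ]
    -- A is central
    have hAcent : ∀ b ∈ M, A * b = b * A := by
      intro b hbM
      rw [hM] at hbM
      exact (hbM A fun γ => (hAcomm γ).symm).symm
    obtain ⟨c, hc⟩ := hfac A hAM hAcent
    -- evaluate at the single at 1, coordinate γ₀
    have h1γ₀ : γ₀ ∈ s := (hmem γ₀).2 ⟨1, by group⟩
    have hval : (A (lp.single 2 (1 : Γ) (1 : ℂ)) : ∀ _ : Γ, ℂ) γ₀ = cc γ₀ := by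
      rw [hA, ContinuousLinearMap.sum_apply, lp.coeFn_sum, Finset.sum_apply]
      refine (Finset.sum_eq_single_of_mem γ₀ h1γ₀ fun δ hδs hδne => ?_).trans ?_
      · rw [ContinuousLinearMap.smul_apply, hsingle, mul_one, hone_right, one_smul,
          lp.coeFn_smul]
        simp only [Pi.smul_apply, smul_eq_mul]
        rw [lp.single_apply_ne _ _ _ (Ne.symm hδne), mul_zero]
      · rw [ContinuousLinearMap.smul_apply, hsingle, mul_one, hone_right, one_smul,
          lp.coeFn_smul]
        simp only [Pi.smul_apply, smul_eq_mul]
        rw [lp.single_apply_self, mul_one]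
    rw [hc, ContinuousLinearMap.smul_apply, ContinuousLinearMap.one_apply,
      lp.coeFn_smul] at hval
    simp only [Pi.smul_apply, smul_eq_mul] at hval
    rw [lp.single_apply_ne _ _ _ hne1, mul_zero] at hval
    have hccγ₀ : cc γ₀ = ψ 1 := cc_spec γ₀ 1 (by group)
    have hψ1 : ψ 1 = 1 := by
      simp only [hψ]
      rw [show (1 : Γ)⁻¹ * γ₀ * 1 = γ₀ by group, hone_right γ₀, hone_left γ₀, inv_one,
        mul_one]
    rw [hccγ₀, hψ1] at hval
    exact one_ne_zero hval.symm
  · -- Kleppner → factor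
    intro hK a haM hacent
    have h_lam_mem : ∀ γ : Γ, lam γ ∈ M := by
      intro γ; rw [hM]; intro b hb; exact (hb γ).symm
    have h_lam_a : ∀ γ : Γ, a * lam γ = lam γ * a := fun γ => hacent (lam γ) (h_lam_mem γ)
    rw [hM] at haM
    have h_rho_a : ∀ γ : Γ, a * rho σ hσ_unit γ = rho σ hσ_unit γ * a :=
      fun γ => haM (rho σ hσ_unit γ) (fun β => rho_lam_comm σ hσ_unit hσ_cocycle lam hlam γ β)
    set f := a (lp.single 2 (1 : Γ) (1 : ℂ)) with hf
    -- matrix coefficients of a in terms of f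
    have key1 : ∀ x y : Γ, (a (lp.single 2 x (1 : ℂ)) : ∀ _ : Γ, ℂ) y
        = σ x x⁻¹ * ((σ y x⁻¹)⁻¹ * f (y * x⁻¹)) := by
      intro x y
      have h1 : rho σ hσ_unit x⁻¹ (lp.single 2 (1 : Γ) (1 : ℂ))
          = (σ x x⁻¹)⁻¹ • (lp.single 2 x (1 : ℂ) : lp (fun _ : Γ => ℂ) 2) := by
        apply lp.ext
        funext z
        rw [rho_apply, lp.coeFn_smul]
        simp only [Pi.smul_apply, smul_eq_mul]
        by_cases hz : z = x
        · subst hz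
          rw [show z * z⁻¹ = (1 : Γ) from mul_inv_cancel z, lp.single_apply_self,
            lp.single_apply_self]
        · rw [lp.single_apply_ne _ _ _ hz,
            lp.single_apply_ne _ _ _ (fun h => hz (by rwa [mul_inv_eq_one] at h)),
            mul_zero, mul_zero]
      have h2 := congrArg (fun T : lp (fun _ : Γ => ℂ) 2 →L[ℂ] lp (fun _ : Γ => ℂ) 2 =>
        T (lp.single 2 (1 : Γ) (1 : ℂ))) (h_rho_a x⁻¹)
      simp only [ContinuousLinearMap.mul_apply] at h2
      rw [h1, map_smul] at h2
      have h3 : a (lp.single 2 x (1 : ℂ)) = σ x x⁻¹ • rho σ hσ_unit x⁻¹ f := by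
        rw [← hf] at h2
        rw [← h2, smul_smul, mul_inv_cancel₀ (hne x x⁻¹), one_smul]
      rw [h3, lp.coeFn_smul]
      simp only [Pi.smul_apply, smul_eq_mul]
      rw [rho_apply]
    -- conjugation relation for f
    have key3 : ∀ γ δ : Γ, f (γ * δ * γ⁻¹)
        = σ (γ * δ) γ⁻¹ * ((σ γ γ⁻¹)⁻¹ * (σ γ δ * f δ)) := by
      intro γ δ
      have h2 := congrArg (fun T : lp (fun _ : Γ => ℂ) 2 →L[ℂ] lp (fun _ : Γ => ℂ) 2 =>
        T (lp.single 2 (1 : Γ) (1 : ℂ))) (h_lam_a γ)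
      simp only [ContinuousLinearMap.mul_apply] at h2
      rw [hsingle γ 1, mul_one, hone_right γ, one_smul, ← hf] at h2
      have h4 := congrArg (fun v : lp (fun _ : Γ => ℂ) 2 => (v : ∀ _ : Γ, ℂ) (γ * δ)) h2
      simp only at h4
      rw [key1 γ (γ * δ), hlam, inv_mul_cancel_left] at h4
      exact csolve1 _ _ _ _ _ (hne γ γ⁻¹) (hne (γ * δ) γ⁻¹) h4
    have keynorm : ∀ γ δ : Γ, ‖f (γ * δ * γ⁻¹)‖ = ‖f δ‖ := by
      intro γ δ
      rw [key3]
      simp [norm_mul, norm_inv, hσ_unit]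
    -- f is supported at 1
    have hsupp : ∀ δ : Γ, δ ≠ 1 → f δ = 0 := by
      intro δ hδ
      by_contra hfδ
      apply hδ
      apply hK δ
      · -- σ-regularity
        intro γ' hcomm
        have hconj : γ' * δ * γ'⁻¹ = δ := by
          rw [← hcomm, mul_inv_cancel_right]
        have h7 := key3 γ' δ
        rw [hconj] at h7
        have h8 := hσ_cocycle δ γ' γ'⁻¹
        rw [mul_inv_cancel γ', hone_right δ, one_mul, hcomm] at h8
        exact csolve2 _ _ _ _ _ (hne (γ' * δ) γ'⁻¹) (hne γ' γ'⁻¹) hfδ h7 h8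
      · -- the conjugacy class is finite
        have hsum := (lp.memℓp f).summable (p := 2) (by norm_num)
        have htend := hsum.tendsto_cofinite_zero
        have hpos : (0 : ℝ) < ‖f δ‖ ^ (2 : ℝ≥0∞).toReal :=
          Real.rpow_pos_of_pos (norm_pos_iff.2 hfδ) _
        have hev : ∀ᶠ y in Filter.cofinite,
            ‖f y‖ ^ (2 : ℝ≥0∞).toReal < ‖f δ‖ ^ (2 : ℝ≥0∞).toReal :=
          htend.eventually_lt_const hpos
        have hfinite : {y : Γ | ¬ ‖f y‖ ^ (2 : ℝ≥0∞).toReal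
            < ‖f δ‖ ^ (2 : ℝ≥0∞).toReal}.Finite := Filter.eventually_cofinite.mp hev
        refine hfinite.subset ?_
        rintro y ⟨β, rfl⟩
        have := keynorm β⁻¹ δ
        rw [inv_inv] at this
        simp only [Set.mem_setOf_eq, this]
        exact lt_irrefl _
    -- conclude a is scalar
    refine ⟨f 1, ?_⟩
    apply ext_singles
    intro x
    rw [ContinuousLinearMap.smul_apply, ContinuousLinearMap.one_apply]
    apply lp.ext
    funext y
    rw [lp.coeFn_smul]
    simp only [Pi.smul_apply, smul_eq_mul]
    rw [key1 x y]
    by_cases hy : y = x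
    · subst hy
      rw [lp.single_apply_self, show y * y⁻¹ = (1 : Γ) from mul_inv_cancel y,
        mul_inv_cancel_left₀ (hne y y⁻¹), mul_one]
    · rw [lp.single_apply_ne _ _ _ hy, mul_zero,
        hsupp _ (fun h => hy (by rwa [mul_inv_eq_one] at h)), mul_zero, mul_zero]
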